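/- Let f : M → M be continuous on a compact metric space, let x ∈ M, and suppose there is p ≥ 1 and δ > 0 such that dist(f^{ℓp + r}(x), f^r(x)) < δ for all ℓ ≥ 0 and 0 ≤ r < p. Let φ : M → ℝ be continuous with modulus: dist(y,z) < δ implies |φ(y) − φ(z)| < ε. Then limsup_{n→∞} (1/n) Σ_{j=0}^{n−1} φ(f^j(x)) − liminf_{n→∞} (1/n) Σ_{j=0}^{n−1} φ(f^j(x)) ≤ 4ε. -/

import Mathlib

open MeasureTheory Filter Topology Metric Set Function

theorem stmt4 {M : Type*} [MetricSpace M] [CompactSpace M]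
    (f : M → M) (hf : Continuous f) (x : M)
    (p : ℕ) (hp : 1 ≤ p) (δ ε : ℝ) (hδ : 0 < δ) (hε : 0 < ε)
    (horbit : ∀ (ℓ r : ℕ), r < p → dist (f^[ℓ * p + r] x) (f^[r] x) < δ)
    (φ : M → ℝ) (hφ : Continuous φ)
    (hmod : ∀ y z : M, dist y z < δ → |φ y - φ z| < ε) :
    Filter.limsup (fun n : ℕ => (n : ℝ)⁻¹ * ∑ j ∈ Finset.range n, φ (f^[j] x)) atTop -
      Filter.liminf (fun n : ℕ => (n : ℝ)⁻¹ * ∑ j ∈ Finset.range n, φ (f^[j] x)) atTop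
      ≤ 4 * ε := by
  have hp0 : 0 < p := hp
  set a : ℕ → ℝ := fun n => (n : ℝ)⁻¹ * ∑ j ∈ Finset.range n, φ (f^[j] x) with ha
  set T : ℝ := ∑ r ∈ Finset.range p, φ (f^[r] x) with hT
  set S : ℝ := T / p with hS
  -- a global bound on |φ|
  obtain ⟨C, hC⟩ : ∃ C : ℝ, ∀ y : M, |φ y| ≤ C := by
    obtain ⟨C, hC⟩ := isBounded_iff_forall_norm_le.mp (isCompact_range hφ).isBounded
    exact ⟨C, fun y => hC _ ⟨y, rfl⟩⟩
  have hC0 : 0 ≤ C := le_trans (abs_nonneg _) (hC x)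
  -- each term is ε-close to the corresponding one in the first block
  have hterm : ∀ j : ℕ, |φ (f^[j] x) - φ (f^[j % p] x)| ≤ ε := by
    intro j
    have h := horbit (j / p) (j % p) (Nat.mod_lt j hp0)
    rw [Nat.div_add_mod'] at h
    exact le_of_lt (hmod _ _ h)
  -- periodic sum identity
  have hper : ∀ m : ℕ, ∑ j ∈ Finset.range (m * p), φ (f^[j % p] x) = m * T := by
    intro m
    induction m with
    | zero => simp
    | succ m ih =>
      rw [Nat.succ_mul, Finset.sum_range_add, ih]
      have : ∀ i ∈ Finset.range p, φ (f^[(m * p + i) % p] x) = φ (f^[i] x) := by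
        intro i hi
        rw [add_comm, Nat.add_mul_mod_self_right, Nat.mod_eq_of_lt (Finset.mem_range.mp hi)]
      rw [Finset.sum_congr rfl this]
      push_cast
      ring
  -- block estimate
  have hblock : ∀ m : ℕ, |(∑ j ∈ Finset.range (m * p), φ (f^[j] x)) - m * T| ≤ (m * p) * ε := by
    intro m
    calc |(∑ j ∈ Finset.range (m * p), φ (f^[j] x)) - m * T|
        = |∑ j ∈ Finset.range (m * p), (φ (f^[j] x) - φ (f^[j % p] x))| := by
          rw [Finset.sum_sub_distrib, hper]
      _ ≤ ∑ j ∈ Finset.range (m * p), |φ (f^[j] x) - φ (f^[j % p] x)| :=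
          Finset.abs_sum_le_sum_abs _ _
      _ ≤ ∑ _j ∈ Finset.range (m * p), ε := Finset.sum_le_sum fun j _ => hterm j
      _ = (m * p) * ε := by simp [mul_comm]
  have hSC : |S| ≤ C := by
    rw [hS, abs_div]
    rw [div_le_iff₀ (by positivity : (0:ℝ) < |(p:ℝ)|)]
    calc |T| ≤ ∑ r ∈ Finset.range p, |φ (f^[r] x)| := Finset.abs_sum_le_sum_abs _ _
      _ ≤ ∑ _r ∈ Finset.range p, C := Finset.sum_le_sum fun r _ => hC _
      _ = p * C := by simp [mul_comm]
      _ ≤ C * |(p:ℝ)| := by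
          rw [abs_of_nonneg (by positivity)]; ring_nf; rfl
  -- main estimate
  have hmain : ∀ n : ℕ, 1 ≤ n → |a n - S| ≤ ε + (2 * p * C) / n := by
    intro n hn
    have hnR : (0:ℝ) < n := by exact_mod_cast hn
    set m := n / p with hm
    set s := n % p with hs
    have hnms : m * p + s = n := Nat.div_add_mod' n p
    have hsum : (∑ j ∈ Finset.range n, φ (f^[j] x)) =
        (∑ j ∈ Finset.range (m * p), φ (f^[j] x)) + ∑ i ∈ Finset.range s, φ (f^[m * p + i] x) := by
      rw [← hnms, Finset.sum_range_add]
    have hnS : (n : ℝ) * S = m * T + s * S := by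
      rw [← hnms]
      push_cast
      rw [hS]
      field_simp
    have htail : |∑ i ∈ Finset.range s, φ (f^[m * p + i] x)| ≤ s * C := by
      calc |∑ i ∈ Finset.range s, φ (f^[m * p + i] x)|
          ≤ ∑ i ∈ Finset.range s, |φ (f^[m * p + i] x)| := Finset.abs_sum_le_sum_abs _ _
        _ ≤ ∑ _i ∈ Finset.range s, C := Finset.sum_le_sum fun i _ => hC _
        _ = s * C := by simp [mul_comm]
    have hsp : s ≤ p := le_of_lt (Nat.mod_lt n hp0)
    have hspR : (s:ℝ) ≤ p := by exact_mod_cast hsp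
    have hkey : |(∑ j ∈ Finset.range n, φ (f^[j] x)) - n * S| ≤ n * ε + 2 * p * C := by
      rw [hsum, hnS]
      have h1 := hblock m
      have h2 : |(s:ℝ) * S| ≤ s * C := by
        rw [abs_mul, abs_of_nonneg (by positivity : (0:ℝ) ≤ (s:ℝ))]
        exact mul_le_mul_of_nonneg_left hSC (by positivity)
      have hmpn : ((m * p : ℕ) : ℝ) ≤ n := by exact_mod_cast Nat.le.intro hnms
      have hsC : (s:ℝ) * C ≤ p * C := mul_le_mul_of_nonneg_right hspR hC0
      have hmpnR : (m:ℝ) * p * ε ≤ n * ε := by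
        have : ((m * p : ℕ) : ℝ) ≤ n := hmpn
        push_cast at this
        exact mul_le_mul_of_nonneg_right this (le_of_lt hε)
      calc |((∑ j ∈ Finset.range (m * p), φ (f^[j] x)) + ∑ i ∈ Finset.range s, φ (f^[m * p + i] x))
              - ((m:ℝ) * T + s * S)|
          ≤ |(∑ j ∈ Finset.range (m * p), φ (f^[j] x)) - m * T|
            + |(∑ i ∈ Finset.range s, φ (f^[m * p + i] x)) - s * S| := by
            have heq : ((∑ j ∈ Finset.range (m * p), φ (f^[j] x)) + ∑ i ∈ Finset.range s, φ (f^[m * p + i] x))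
              - ((m:ℝ) * T + s * S) = ((∑ j ∈ Finset.range (m * p), φ (f^[j] x)) - m * T)
              + ((∑ i ∈ Finset.range s, φ (f^[m * p + i] x)) - s * S) := by ring
            rw [heq]; exact abs_add_le _ _
        _ ≤ (m:ℝ) * p * ε + (s * C + s * C) := by
            gcongr
            exact le_trans (abs_sub _ _) (add_le_add htail h2)
        _ ≤ n * ε + 2 * p * C := by linarith
    have habs : |a n - S| = (n:ℝ)⁻¹ * |(∑ j ∈ Finset.range n, φ (f^[j] x)) - n * S| := by
      have heq : a n - S = (n:ℝ)⁻¹ * ((∑ j ∈ Finset.range n, φ (f^[j] x)) - n * S) := by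
        simp only [ha]
        field_simp
      rw [heq, abs_mul, abs_of_pos (inv_pos.mpr hnR)]
    rw [habs, inv_mul_le_iff₀ hnR]
    calc |(∑ j ∈ Finset.range n, φ (f^[j] x)) - n * S| ≤ n * ε + 2 * p * C := hkey
      _ = n * (ε + 2 * p * C / n) := by field_simp
  -- eventual bounds
  have htend : Tendsto (fun n : ℕ => (2 * p * C) / n) atTop (nhds 0) :=
    tendsto_const_div_atTop_nhds_zero_nat _
  have hev : ∀ᶠ n : ℕ in atTop, S - 2 * ε ≤ a n ∧ a n ≤ S + 2 * ε := by
    have h1 : ∀ᶠ n : ℕ in atTop, (2 * p * C) / n ≤ ε := by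
      have := htend.eventually (ge_mem_nhds hε)
      filter_upwards [this] with n hn using hn
    filter_upwards [h1, Filter.eventually_ge_atTop 1] with n hn hn1
    have := hmain n hn1
    have h2 : |a n - S| ≤ 2 * ε := le_trans this (by linarith)
    rw [abs_le] at h2
    constructor <;> linarith [h2.1, h2.2]
  have hub : ∀ᶠ n : ℕ in atTop, a n ≤ S + 2 * ε := hev.mono fun n h => h.2
  have hlb : ∀ᶠ n : ℕ in atTop, S - 2 * ε ≤ a n := hev.mono fun n h => h.1
  have hls : Filter.limsup a atTop ≤ S + 2 * ε :=
    limsup_le_of_le (isCoboundedUnder_le_of_eventually_le _ hlb) hub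
  have hli : S - 2 * ε ≤ Filter.liminf a atTop :=
    le_liminf_of_le (isCoboundedUnder_ge_of_eventually_le _ hub) hlb
  linarith
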